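/- Every 1-dimensional complex triassociative algebra is isomorphic to exactly one of: (i) the abelian algebra (all three products zero); (ii) the algebra with x⊢x = x⊣x = 0 and x⊥x = x; (iii) the algebra with x⊢x = x⊣x = x⊥x = x. -/

import Mathlib

/-- A triassociative algebra structure on a complex vector space `T`:
three bilinear operations `l` (⊢), `r` (⊣), `m` (⊥) satisfying the
11 Loday–Ronco identities. -/
structure Trias (T : Type*) [AddCommGroup T] [Module ℂ T] where
  l : T →ₗ[ℂ] T →ₗ[ℂ] T
  r : T →ₗ[ℂ] T →ₗ[ℂ] T
  m : T →ₗ[ℂ] T →ₗ[ℂ] T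
  A1 : ∀ x y z, l (l x y) z = l x (l y z)
  A2 : ∀ x y z, r (r x y) z = r x (r y z)
  D1 : ∀ x y z, l (r x y) z = l x (l y z)
  D2 : ∀ x y z, r (r x y) z = r x (l y z)
  S1 : ∀ x y z, r (l x y) z = l x (r y z)
  T1 : ∀ x y z, l (m x y) z = l x (l y z)
  T2 : ∀ x y z, r (r x y) z = r x (m y z)
  T3 : ∀ x y z, m (l x y) z = l x (m y z)
  T4 : ∀ x y z, r (m x y) z = m x (r y z)
  S2 : ∀ x y z, m (r x y) z = m x (l y z)
  A3 : ∀ x y z, m (m x y) z = m x (m y z)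

/-- `T` has a basis vector `x` with all three products of `x` with itself zero
(i.e. `T ≅ Trias₁¹`, the abelian algebra). -/
def IsTrias11 {T : Type*} [AddCommGroup T] [Module ℂ T] (A : Trias T) : Prop :=
  ∃ x : T, x ≠ 0 ∧ A.l x x = 0 ∧ A.r x x = 0 ∧ A.m x x = 0

/-- `T ≅ Trias₁²`: a basis vector `x` with `x⊢x = x⊣x = 0` and `x⊥x = x`. -/
def IsTrias12 {T : Type*} [AddCommGroup T] [Module ℂ T] (A : Trias T) : Prop :=
  ∃ x : T, x ≠ 0 ∧ A.l x x = 0 ∧ A.r x x = 0 ∧ A.m x x = x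

/-- `T ≅ Trias₁³`: a basis vector `x` with `x⊢x = x⊣x = x⊥x = x`. -/
def IsTrias13 {T : Type*} [AddCommGroup T] [Module ℂ T] (A : Trias T) : Prop :=
  ∃ x : T, x ≠ 0 ∧ A.l x x = x ∧ A.r x x = x ∧ A.m x x = x

/-- Every 1-dimensional complex triassociative algebra is isomorphic to exactly
one of `Trias₁¹`, `Trias₁²`, `Trias₁³`. -/
theorem stmt4 {T : Type*} [AddCommGroup T] [Module ℂ T]
    (hdim : Module.finrank ℂ T = 1) (A : Trias T) :
    (IsTrias11 A ∧ ¬ IsTrias12 A ∧ ¬ IsTrias13 A) ∨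
    (¬ IsTrias11 A ∧ IsTrias12 A ∧ ¬ IsTrias13 A) ∨
    (¬ IsTrias11 A ∧ ¬ IsTrias12 A ∧ IsTrias13 A) := by

  classical
  obtain ⟨e, he, hspan⟩ := (finrank_eq_one_iff' ).mp hdim
  have inj : ∀ s t : ℂ, s • e = t • e → s = t := by
    intro s t h
    have := smul_left_injective ℂ he h
    exact this
  obtain ⟨a, ha⟩ := hspan (A.l e e)
  obtain ⟨b, hb⟩ := hspan (A.r e e)
  obtain ⟨c, hc⟩ := hspan (A.m e e)
  -- general product formulas
  have hl : ∀ t : ℂ, A.l (t • e) (t • e) = (t * t * a) • e := by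
    intro t
    simp [map_smul, LinearMap.smul_apply, ← ha, smul_smul, mul_assoc]
  have hr : ∀ t : ℂ, A.r (t • e) (t • e) = (t * t * b) • e := by
    intro t
    simp [map_smul, LinearMap.smul_apply, ← hb, smul_smul, mul_assoc]
  have hm : ∀ t : ℂ, A.m (t • e) (t • e) = (t * t * c) • e := by
    intro t
    simp [map_smul, LinearMap.smul_apply, ← hc, smul_smul, mul_assoc]
  -- relations from the axioms
  have hD1 : b * a = a * a := by
    have h := A.D1 e e e
    rw [← hb, ← ha] at h
    simp only [map_smul, LinearMap.smul_apply, ← ha, smul_smul] at h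
    exact inj _ _ h
  have hD2 : b * b = a * b := by
    have h := A.D2 e e e
    rw [← hb, ← ha] at h
    simp only [map_smul, LinearMap.smul_apply, ← hb, smul_smul] at h
    exact inj _ _ h
  have hT1 : c * a = a * a := by
    have h := A.T1 e e e
    rw [← hc, ← ha] at h
    simp only [map_smul, LinearMap.smul_apply, ← ha, smul_smul] at h
    exact inj _ _ h
  have hT2 : b * b = c * b := by
    have h := A.T2 e e e
    rw [← hb, ← hc] at h
    simp only [map_smul, LinearMap.smul_apply, ← hb, smul_smul] at h
    exact inj _ _ h
  -- helper: any nonzero x is t • e with t ≠ 0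
  have hrep : ∀ x : T, x ≠ 0 → ∃ t : ℂ, t ≠ 0 ∧ x = t • e := by
    intro x hx
    obtain ⟨t, ht⟩ := hspan x
    refine ⟨t, ?_, ht.symm⟩
    rintro rfl
    simp at ht
    exact hx ht.symm
  by_cases hA : a = 0
  · have hB : b = 0 := by
      have : b * b = 0 := by rw [hD2, hA, zero_mul]
      exact pow_eq_zero_iff (n := 2) two_ne_zero |>.mp (by rw [pow_two]; exact this)
    by_cases hC : c = 0
    · -- abelian case
      refine Or.inl ⟨⟨e, he, ?_, ?_, ?_⟩, ?_, ?_⟩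
      · rw [show A.l e e = A.l ((1:ℂ) • e) ((1:ℂ) • e) by simp, hl, hA]; simp
      · rw [show A.r e e = A.r ((1:ℂ) • e) ((1:ℂ) • e) by simp, hr, hB]; simp
      · rw [show A.m e e = A.m ((1:ℂ) • e) ((1:ℂ) • e) by simp, hm, hC]; simp
      · rintro ⟨x, hx, -, -, hmx⟩
        obtain ⟨t, ht, rfl⟩ := hrep x hx
        rw [hm, hC] at hmx
        simp only [mul_zero, zero_smul] at hmx
        exact (smul_ne_zero ht he) hmx.symm
      · rintro ⟨x, hx, hlx, -, -⟩
        obtain ⟨t, ht, rfl⟩ := hrep x hx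
        rw [hl, hA] at hlx
        simp only [mul_zero, zero_smul] at hlx
        exact (smul_ne_zero ht he) hlx.symm
    · -- Trias₁² case
      refine Or.inr (Or.inl ⟨?_, ⟨c⁻¹ • e, smul_ne_zero (inv_ne_zero hC) he, ?_, ?_, ?_⟩, ?_⟩)
      · rintro ⟨x, hx, -, -, hmx⟩
        obtain ⟨t, ht, rfl⟩ := hrep x hx
        rw [hm] at hmx
        have : t * t * c = 0 := by
          by_contra h
          exact (smul_ne_zero h he) hmx
        exact hC (by field_simp at this; simpa [ht] using this)
      · rw [hl, hA]; simp
      · rw [hr, hB]; simp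
      · rw [hm]
        congr 1
        field_simp
      · rintro ⟨x, hx, hlx, -, -⟩
        obtain ⟨t, ht, rfl⟩ := hrep x hx
        rw [hl, hA] at hlx
        simp only [mul_zero, zero_smul] at hlx
        exact (smul_ne_zero ht he) hlx.symm
  · -- a ≠ 0, so b = a, c = a
    have hB : b = a := by
      have := hD1
      field_simp at this
      exact mul_right_cancel₀ hA hD1
    have hC : c = a := by
      have := hT1
      field_simp at this
      exact mul_right_cancel₀ hA hT1
    refine Or.inr (Or.inr ⟨?_, ?_, ⟨a⁻¹ • e, smul_ne_zero (inv_ne_zero hA) he, ?_, ?_, ?_⟩⟩)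
    · rintro ⟨x, hx, hlx, -, -⟩
      obtain ⟨t, ht, rfl⟩ := hrep x hx
      rw [hl] at hlx
      simp only [smul_eq_zero] at hlx
      rcases hlx with h | h
      · exact hA (by field_simp at h; simpa [ht] using h)
      · exact he h
    · rintro ⟨x, hx, hlx, -, -⟩
      obtain ⟨t, ht, rfl⟩ := hrep x hx
      rw [hl] at hlx
      simp only [smul_eq_zero] at hlx
      rcases hlx with h | h
      · exact hA (by field_simp at h; simpa [ht] using h)
      · exact he h
    · rw [hl]; congr 1; field_simp
    · rw [hr, hB]; congr 1; field_simp
    · rw [hm, hC]; congr 1; field_simp
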